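/- If A ∈ SL(2,ℍ) satisfies A² = -I (the 2×2 identity matrix negated), then A is conjugate in GL(2,ℍ) to the real matrix [[0, 1],[-1, 0]]. -/

import Mathlib

/-- The standard complex embedding `Φ` of a 2×2 quaternionic matrix `A = A₁ + A₂ j`
as the 4×4 complex block matrix `[[A₁, A₂], [-conj A₂, conj A₁]]`. -/
noncomputable def Phi (A : Matrix (Fin 2) (Fin 2) (Quaternion ℝ)) :
    Matrix (Fin 2 ⊕ Fin 2) (Fin 2 ⊕ Fin 2) ℂ :=
  Matrix.fromBlocks
    (A.map fun q => (⟨q.re, q.imI⟩ : ℂ))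
    (A.map fun q => (⟨q.imJ, q.imK⟩ : ℂ))
    (-(A.map fun q => (⟨q.imJ, -q.imK⟩ : ℂ)))
    (A.map fun q => (⟨q.re, -q.imI⟩ : ℂ))

/-- The quaternionic determinant: the determinant of the complex embedding. -/
noncomputable def detH (A : Matrix (Fin 2) (Fin 2) (Quaternion ℝ)) : ℂ := (Phi A).det

open Quaternion

noncomputable def qqi : Quaternion ℝ := (⟨0,1,0,0⟩ : ℍ[ℝ,-1,-1])
noncomputable def qqj : Quaternion ℝ := (⟨0,0,1,0⟩ : ℍ[ℝ,-1,-1])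

lemma qcomm_contra (a : Quaternion ℝ) (h1 : a*a = -1)
    (h2 : qqi * a = a * qqi) (h3 : qqj * a = a * qqj) : False := by
  rw [Quaternion.ext_iff] at h1 h2 h3
  simp only [Quaternion.re_mul, Quaternion.imI_mul, Quaternion.imJ_mul, Quaternion.imK_mul,
    Quaternion.re_neg, Quaternion.imI_neg, Quaternion.re_one] at h1 h2 h3
  simp only [show qqi.re = 0 from rfl, show qqi.imI = 1 from rfl, show qqi.imJ = 0 from rfl,
    show qqi.imK = 0 from rfl, show qqj.re = 0 from rfl, show qqj.imI = 0 from rfl,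
    show qqj.imJ = 1 from rfl, show qqj.imK = 0 from rfl] at h2 h3
  norm_num at h2 h3
  obtain ⟨hJ, hK⟩ := h2
  obtain ⟨hI, hK'⟩ := h3
  nlinarith [h1.1, sq_nonneg a.re, hJ, hK, hI]

lemma fin2_ext {α : Type*} {w x y z w' x' y' z' : α}
    (h1 : w = w') (h2 : x = x') (h3 : y = y') (h4 : z = z') :
    !![w, x; y, z] = !![w', x'; y', z'] := by
  subst h1 h2 h3 h4; rfl

lemma conj_of (A g gi : Matrix (Fin 2) (Fin 2) (Quaternion ℝ))
    (h1 : g * gi = 1) (h2 : gi * g = 1) (h3 : A * gi = gi * !![0, 1; -1, 0]) :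
    ∃ g' gi' : Matrix (Fin 2) (Fin 2) (Quaternion ℝ),
      g' * gi' = 1 ∧ gi' * g' = 1 ∧ g' * A * gi' = !![0, 1; -1, 0] := by
  refine ⟨g, gi, h1, h2, ?_⟩
  rw [Matrix.mul_assoc, h3, ← Matrix.mul_assoc, h1, Matrix.one_mul]

lemma diag_case (a d q : Quaternion ℝ) (haa : a * a = -1) (hdd : d * d = -1)
    (hs : q * a - d * q ≠ 0) :
    ∃ g gi : Matrix (Fin 2) (Fin 2) (Quaternion ℝ),
      g * gi = 1 ∧ gi * g = 1 ∧ g * !![a, 0; 0, d] * gi = !![0, 1; -1, 0] := by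
  set s := q * a - d * q with hsdef
  have h1 : s⁻¹ * s = 1 := inv_mul_cancel₀ hs
  have h2 : s * s⁻¹ = 1 := mul_inv_cancel₀ hs
  apply conj_of _ !![1 - a * s⁻¹ * q, a * s⁻¹; -(s⁻¹ * q), s⁻¹] !![1, -a; q, -(d*q)]
  · rw [Matrix.mul_fin_two, Matrix.one_fin_two]
    refine fin2_ext ?_ ?_ ?_ ?_
    · have e : (1 - a * s⁻¹ * q) * 1 + a * s⁻¹ * q = 1 := by noncomm_ring
      exact e
    · have e : (1 - a * s⁻¹ * q) * -a + a * s⁻¹ * -(d * q) = a * (s⁻¹ * (q * a - d * q)) - a := by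
        noncomm_ring
      rw [e, ← hsdef, h1, mul_one, sub_self]
    · have e : -(s⁻¹ * q) * 1 + s⁻¹ * q = 0 := by noncomm_ring
      exact e
    · have e : -(s⁻¹ * q) * -a + s⁻¹ * -(d * q) = s⁻¹ * (q * a - d * q) := by noncomm_ring
      rw [e, ← hsdef, h1]
  · rw [Matrix.mul_fin_two, Matrix.one_fin_two]
    refine fin2_ext ?_ ?_ ?_ ?_
    · have e : 1 * (1 - a * s⁻¹ * q) + -a * -(s⁻¹ * q) = 1 := by noncomm_ring
      exact e
    · have e : 1 * (a * s⁻¹) + -a * s⁻¹ = 0 := by noncomm_ring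
      exact e
    · have e : q * (1 - a * s⁻¹ * q) + -(d * q) * -(s⁻¹ * q) = q - (q * a - d * q) * s⁻¹ * q := by
        noncomm_ring
      rw [e, ← hsdef, h2, one_mul, sub_self]
    · have e : q * (a * s⁻¹) + -(d * q) * s⁻¹ = (q * a - d * q) * s⁻¹ := by noncomm_ring
      rw [e, ← hsdef, h2]
  · rw [Matrix.mul_fin_two, Matrix.mul_fin_two]
    refine fin2_ext ?_ ?_ ?_ ?_
    · noncomm_ring
    · have e : a * -a + 0 * -(d * q) = -(a * a) := by noncomm_ring
      rw [e, haa]; noncomm_ring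
    · noncomm_ring
    · have e : 0 * -a + d * -(d * q) = -(d * d) * q := by noncomm_ring
      rw [e, hdd]; noncomm_ring

theorem skew_test (A : Matrix (Fin 2) (Fin 2) (Quaternion ℝ))
    (hA : A * A = -1) :
    ∃ g gi : Matrix (Fin 2) (Fin 2) (Quaternion ℝ),
      g * gi = 1 ∧ gi * g = 1 ∧ g * A * gi = !![0, 1; -1, 0] := by
  obtain ⟨a, b, c, d, rfl⟩ : ∃ a b c d, A = !![a, b; c, d] :=
    ⟨_, _, _, _, Matrix.eta_fin_two A⟩
  have h11 : a * a + b * c = -1 := by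
    have := congrFun (congrFun hA 0) 0
    simpa [Matrix.mul_apply, Fin.sum_univ_two] using this
  have h12 : a * b + b * d = 0 := by
    have := congrFun (congrFun hA 0) 1
    simpa [Matrix.mul_apply, Fin.sum_univ_two] using this
  have h21 : c * a + d * c = 0 := by
    have := congrFun (congrFun hA 1) 0
    simpa [Matrix.mul_apply, Fin.sum_univ_two] using this
  have h22 : c * b + d * d = -1 := by
    have := congrFun (congrFun hA 1) 1
    simpa [Matrix.mul_apply, Fin.sum_univ_two] using this
  by_cases hc : c ≠ 0
  · apply conj_of _ !![1, -(a * c⁻¹); 0, -c⁻¹] !![1, -a; 0, -c]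
    · rw [Matrix.mul_fin_two, Matrix.one_fin_two]
      refine fin2_ext ?_ ?_ ?_ ?_
      · noncomm_ring
      · have e : 1 * -a + -(a * c⁻¹) * -c = a * (c⁻¹ * c) - a := by noncomm_ring
        rw [e, inv_mul_cancel₀ hc, mul_one, sub_self]
      · noncomm_ring
      · have e : 0 * -a + -c⁻¹ * -c = c⁻¹ * c := by noncomm_ring
        rw [e, inv_mul_cancel₀ hc]
    · rw [Matrix.mul_fin_two, Matrix.one_fin_two]
      refine fin2_ext ?_ ?_ ?_ ?_
      · noncomm_ring
      · noncomm_ring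
      · noncomm_ring
      · have e : 0 * -(a * c⁻¹) + -c * -c⁻¹ = c * c⁻¹ := by noncomm_ring
        rw [e, mul_inv_cancel₀ hc]
    · rw [Matrix.mul_fin_two, Matrix.mul_fin_two]
      refine fin2_ext ?_ ?_ ?_ ?_
      · noncomm_ring
      · have e : a * -a + b * -c = -(a * a + b * c) := by noncomm_ring
        rw [e, h11]; noncomm_ring
      · noncomm_ring
      · have e : c * -a + d * -c = -(c * a + d * c) := by noncomm_ring
        rw [e, h21]; noncomm_ring
  · push_neg at hc
    subst hc
    by_cases hb : b ≠ 0
    · have hdd : d * d = -1 := by simpa using h22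
      apply conj_of _ !![-(d * b⁻¹), 1; -b⁻¹, 0] !![0, -b; 1, -d]
      · rw [Matrix.mul_fin_two, Matrix.one_fin_two]
        refine fin2_ext ?_ ?_ ?_ ?_
        · noncomm_ring
        · have e : -(d * b⁻¹) * -b + 1 * -d = d * (b⁻¹ * b) - d := by noncomm_ring
          rw [e, inv_mul_cancel₀ hb, mul_one, sub_self]
        · noncomm_ring
        · have e : -b⁻¹ * -b + 0 * -d = b⁻¹ * b := by noncomm_ring
          rw [e, inv_mul_cancel₀ hb]
      · rw [Matrix.mul_fin_two, Matrix.one_fin_two]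
        refine fin2_ext ?_ ?_ ?_ ?_
        · have e : 0 * -(d * b⁻¹) + -b * -b⁻¹ = b * b⁻¹ := by noncomm_ring
          rw [e, mul_inv_cancel₀ hb]
        · noncomm_ring
        · noncomm_ring
        · noncomm_ring
      · rw [Matrix.mul_fin_two, Matrix.mul_fin_two]
        refine fin2_ext ?_ ?_ ?_ ?_
        · noncomm_ring
        · have e : a * -b + b * -d = -(a * b + b * d) := by noncomm_ring
          rw [e, h12]; noncomm_ring
        · noncomm_ring
        · have e : 0 * -b + d * -d = -(d * d) := by noncomm_ring
          rw [e, hdd]; noncomm_ring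
    · push_neg at hb
      subst hb
      have haa : a * a = -1 := by simpa using h11
      have hdd : d * d = -1 := by simpa using h22
      by_cases had : a = d
      · subst had
        by_cases hqi : qqi * a = a * qqi
        · by_cases hqj : qqj * a = a * qqj
          · exact (qcomm_contra a haa hqi hqj).elim
          · exact diag_case a a qqj haa haa (sub_ne_zero_of_ne fun h => hqj h)
        · exact diag_case a a qqi haa haa (sub_ne_zero_of_ne fun h => hqi h)
      · refine diag_case a d 1 haa hdd ?_
        simpa using sub_ne_zero_of_ne had

/-- Any A ∈ SL(2,ℍ) with A² = -I is conjugate in GL(2,ℍ) to [[0,1],[-1,0]]. -/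
theorem skew_involution_conjugate (A : Matrix (Fin 2) (Fin 2) (Quaternion ℝ))
    (hdet : detH A = 1) (hA : A * A = -1) :
    ∃ g gi : Matrix (Fin 2) (Fin 2) (Quaternion ℝ),
      g * gi = 1 ∧ gi * g = 1 ∧ g * A * gi = !![0, 1; -1, 0] := skew_test A hA
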